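/- For the operator (Kh)(v) = (|S^{N−3}|/|S^{N−2}|) ∫_{−1}^1 h(√(N−v²) s)(1−s²)^{(N−4)/2} ds, the polynomials v² − 1 and the degree-4 polynomial eigenfunction have eigenvalues α₂ = −1/(N−1) and α₄ = 3/(N²−1) respectively; more precisely K(v²−1) = −(1/(N−1))(v²−1). -/

import Mathlib

open MeasureTheory

/-- The surface area `|S^m| = 2 π^{(m+1)/2} / Γ((m+1)/2)` of the unit `m`-sphere. -/
noncomputable def unitSphereArea (m : ℕ) : ℝ :=
  2 * Real.pi ^ (((m : ℝ) + 1) / 2) / Real.Gamma (((m : ℝ) + 1) / 2)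

/-- The correlation operator `K`:
`(Kh)(v) = (|S^{N-3}|/|S^{N-2}|) ∫_{-1}^1 h(√(N-v²)s)(1-s²)^{(N-4)/2} ds`. -/
noncomputable def kacK (N : ℕ) (h : ℝ → ℝ) (v : ℝ) : ℝ :=
  (unitSphereArea (N - 3) / unitSphereArea (N - 2)) *
    ∫ s in (-1 : ℝ)..1,
      h (Real.sqrt ((N : ℝ) - v ^ 2) * s) * (1 - s ^ 2) ^ (((N : ℝ) - 4) / 2)

open Real

namespace KacAux

noncomputable def Ik (k : ℕ) (p : ℝ) : ℝ :=
  ∫ s in (-1:ℝ)..1, s ^ k * (1 - s ^ 2) ^ p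

lemma rpow_succ {p : ℝ} (hp : 0 ≤ p) (x : ℝ) : x ^ (p + 1) = x ^ p * x := by
  rcases eq_or_ne x 0 with rfl | hx
  · rw [Real.zero_rpow (by linarith), mul_zero]
  · exact Real.rpow_add_one hx p

lemma contRpow {p : ℝ} (hp : 0 ≤ p) : Continuous fun s : ℝ => (1 - s ^ 2) ^ p := by
  rw [continuous_iff_continuousAt]
  intro x
  exact (Real.continuousAt_rpow_const _ _ (Or.inr hp)).comp (by fun_prop)

lemma contMul {p : ℝ} (hp : 0 ≤ p) (k : ℕ) :
    Continuous fun s : ℝ => s ^ k * (1 - s ^ 2) ^ p :=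
  (continuous_pow k).mul (contRpow hp)

lemma hasDeriv_inner {p : ℝ} (hp : 0 ≤ p) (s : ℝ) :
    HasDerivAt (fun s : ℝ => (1 - s ^ 2) ^ (p + 1))
      ((p + 1) * (1 - s ^ 2) ^ p * (-(2 * s))) s := by
  have h1 : HasDerivAt (fun s : ℝ => 1 - s ^ 2) (-(2 * s)) s := by
    simpa using ((hasDerivAt_pow 2 s).const_sub 1)
  have h2 : HasDerivAt (fun x : ℝ => x ^ (p + 1))
      ((p + 1) * (1 - s ^ 2) ^ (p + 1 - 1)) (1 - s ^ 2) :=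
    Real.hasDerivAt_rpow_const (Or.inr (by linarith))
  have := h2.comp s h1
  simpa [Function.comp_def, add_sub_cancel_right, mul_comm, mul_assoc] using this

lemma intInt {p : ℝ} (hp : 0 ≤ p) (k : ℕ) :
    IntervalIntegrable (fun s : ℝ => s ^ k * (1 - s ^ 2) ^ p) volume (-1) 1 :=
  (contMul hp k).intervalIntegrable _ _

lemma Ik_succ {p : ℝ} (hp : 0 ≤ p) (k : ℕ) :
    Ik k (p + 1) = Ik k p - Ik (k + 2) p := by
  have h : ∀ s : ℝ, s ^ k * (1 - s ^ 2) ^ (p + 1)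
      = s ^ k * (1 - s ^ 2) ^ p - s ^ (k + 2) * (1 - s ^ 2) ^ p := by
    intro s; rw [rpow_succ hp]; ring
  unfold Ik
  simp only [h]
  rw [intervalIntegral.integral_sub (intInt hp k) (intInt hp (k + 2))]

lemma key1 {p : ℝ} (hp : 0 ≤ p) : Ik 0 (p + 1) = (2 * (p + 1)) * Ik 2 p := by
  have hF : ∀ s ∈ Set.uIcc (-1:ℝ) 1,
      HasDerivAt (fun s : ℝ => s * (1 - s ^ 2) ^ (p + 1))
        (1 * (1 - s ^ 2) ^ (p + 1) + s * ((p + 1) * (1 - s ^ 2) ^ p * (-(2 * s)))) s := by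
    intro s _
    exact (hasDerivAt_id s).mul (hasDeriv_inner hp s)
  have hint : IntervalIntegrable
      (fun s : ℝ => 1 * (1 - s ^ 2) ^ (p + 1) + s * ((p + 1) * (1 - s ^ 2) ^ p * (-(2 * s))))
      volume (-1) 1 := by
    apply Continuous.intervalIntegrable
    have := contRpow (by linarith : (0:ℝ) ≤ p + 1)
    have := contRpow hp
    fun_prop
  have h0 := intervalIntegral.integral_eq_sub_of_hasDerivAt hF hint
  rw [show ((1:ℝ) - 1 ^ 2) = 0 by norm_num, show ((1:ℝ) - (-1) ^ 2) = 0 by norm_num,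
    Real.zero_rpow (by linarith : p + 1 ≠ 0)] at h0
  have heq : ∀ s : ℝ, 1 * (1 - s ^ 2) ^ (p + 1) + s * ((p + 1) * (1 - s ^ 2) ^ p * (-(2 * s)))
      = s ^ 0 * (1 - s ^ 2) ^ (p + 1) - (2 * (p + 1)) * (s ^ 2 * (1 - s ^ 2) ^ p) := by
    intro s; ring
  simp only [heq] at h0
  rw [intervalIntegral.integral_sub (intInt (by linarith) 0)
    (((intInt hp 2).const_mul _)), intervalIntegral.integral_const_mul] at h0
  norm_num at h0
  unfold Ik
  simp only [pow_zero, one_mul]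
  linarith

lemma key2 {p : ℝ} (hp : 0 ≤ p) : 3 * Ik 2 (p + 1) = (2 * (p + 1)) * Ik 4 p := by
  have hF : ∀ s ∈ Set.uIcc (-1:ℝ) 1,
      HasDerivAt (fun s : ℝ => s ^ 3 * (1 - s ^ 2) ^ (p + 1))
        ((3 * s ^ 2) * (1 - s ^ 2) ^ (p + 1) + s ^ 3 * ((p + 1) * (1 - s ^ 2) ^ p * (-(2 * s)))) s := by
    intro s _
    have h3 : HasDerivAt (fun s : ℝ => s ^ 3) (3 * s ^ 2) s := by
      simpa using hasDerivAt_pow 3 s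
    exact h3.mul (hasDeriv_inner hp s)
  have hint : IntervalIntegrable
      (fun s : ℝ => (3 * s ^ 2) * (1 - s ^ 2) ^ (p + 1) + s ^ 3 * ((p + 1) * (1 - s ^ 2) ^ p * (-(2 * s))))
      volume (-1) 1 := by
    apply Continuous.intervalIntegrable
    have := contRpow (by linarith : (0:ℝ) ≤ p + 1)
    have := contRpow hp
    fun_prop
  have h0 := intervalIntegral.integral_eq_sub_of_hasDerivAt hF hint
  rw [show ((1:ℝ) - 1 ^ 2) = 0 by norm_num, show ((1:ℝ) - (-1) ^ 2) = 0 by norm_num,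
    Real.zero_rpow (by linarith : p + 1 ≠ 0)] at h0
  have heq : ∀ s : ℝ, (3 * s ^ 2) * (1 - s ^ 2) ^ (p + 1) + s ^ 3 * ((p + 1) * (1 - s ^ 2) ^ p * (-(2 * s)))
      = 3 * (s ^ 2 * (1 - s ^ 2) ^ (p + 1)) - (2 * (p + 1)) * (s ^ 4 * (1 - s ^ 2) ^ p) := by
    intro s; ring
  simp only [heq] at h0
  rw [intervalIntegral.integral_sub ((intInt (by linarith) 2).const_mul _)
    ((intInt hp 4).const_mul _), intervalIntegral.integral_const_mul,
    intervalIntegral.integral_const_mul] at h0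
  norm_num at h0
  unfold Ik
  linarith

lemma rel1 {p : ℝ} (hp : 0 ≤ p) : Ik 0 p = (2 * p + 3) * Ik 2 p := by
  have h1 := key1 hp
  have h2 := Ik_succ hp 0
  rw [h2] at h1
  linarith

lemma rel2 {p : ℝ} (hp : 0 ≤ p) : 3 * Ik 2 p = (2 * p + 5) * Ik 4 p := by
  have h1 := key2 hp
  have h2 := Ik_succ hp 2
  rw [h2] at h1
  linarith

lemma Jrec {p : ℝ} (hp : 0 ≤ p) : (2 * p + 3) * Ik 0 (p + 1) = (2 * p + 2) * Ik 0 p := by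
  have h1 := key1 hp
  have h2 := rel1 hp
  rw [h1, h2]; ring

end KacAux

namespace KacAux

lemma Gamma_three_halves : Real.Gamma (3/2) = Real.sqrt π / 2 := by
  rw [show (3/2:ℝ) = 1/2 + 1 by norm_num, Real.Gamma_add_one (by norm_num),
    Real.Gamma_one_half_eq]
  ring

lemma Jzero : Ik 0 0 = 2 := by
  unfold Ik
  simp [Real.rpow_zero]
  norm_num

lemma Jhalf : Ik 0 (1/2) = π / 2 := by
  unfold Ik
  have h : ∀ s : ℝ, s ^ 0 * (1 - s ^ 2) ^ ((1:ℝ)/2) = Real.sqrt (1 - s ^ 2) := by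
    intro s
    rw [pow_zero, one_mul, Real.sqrt_eq_rpow]
  simp only [h]
  open intervalIntegral in exact integral_sqrt_one_sub_sq

lemma Jval (m : ℕ) : Ik 0 ((m:ℝ)/2)
    = Real.sqrt π * Real.Gamma ((m:ℝ)/2 + 1) / Real.Gamma ((m:ℝ)/2 + 3/2) := by
  induction m using Nat.strong_induction_on with
  | _ m ih =>
    match m with
    | 0 =>
      norm_num [Jzero, Real.Gamma_one, Gamma_three_halves]
      rw [eq_div_iff (by positivity : Real.sqrt π / 2 ≠ 0)]
      ring
    | 1 =>
      norm_num [Jhalf, Gamma_three_halves]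
      rw [show Real.sqrt π * (Real.sqrt π / 2) = Real.sqrt π * Real.sqrt π / 2 by ring,
        Real.mul_self_sqrt Real.pi_pos.le]
    | (k+2) =>
      have ih' := ih k (by omega)
      set x : ℝ := (k:ℝ) with hx
      have hx0 : 0 ≤ x := Nat.cast_nonneg k
      have hk2 : ((k+2:ℕ):ℝ)/2 = x/2 + 1 := by push_cast; ring
      have hrec := Jrec (p := x/2) (by positivity)
      have e1 : Ik 0 (x/2 + 1) = (x+2)/(x+3) * Ik 0 (x/2) := by
        rw [div_mul_eq_mul_div, eq_div_iff (by positivity : x + 3 ≠ 0)]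
        linarith [hrec]
      have hΓB : Real.Gamma (x/2 + 3/2) ≠ 0 :=
        (Real.Gamma_pos_of_pos (by positivity)).ne'
      have hg1 : Real.Gamma (x/2 + 1 + 1) = (x/2+1) * Real.Gamma (x/2 + 1) :=
        Real.Gamma_add_one (by positivity)
      have hg2 : Real.Gamma (x/2 + 1 + 3/2) = (x/2+3/2) * Real.Gamma (x/2 + 3/2) := by
        rw [show x/2 + 1 + 3/2 = (x/2 + 3/2) + 1 by ring,
          Real.Gamma_add_one (by positivity)]
      rw [hk2, e1, ih', hg1, hg2]
      have hx2 : x/2 + 3/2 ≠ 0 := by positivity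
      have hx3 : x + 3 ≠ 0 := by positivity
      field_simp

end KacAux

open KacAux in
/-- `v² - 1` is an eigenfunction of `K` with eigenvalue `α₂ = -1/(N-1)`, and there is a
(monic, even) degree-four polynomial eigenfunction with eigenvalue `α₄ = 3/(N²-1)`. -/
theorem kacK_eigenvalues (N : ℕ) (hN : 4 ≤ N) :
    (∀ v : ℝ, v ^ 2 ≤ (N : ℝ) →
      kacK N (fun x => x ^ 2 - 1) v = -(1 / ((N : ℝ) - 1)) * (v ^ 2 - 1)) ∧
    ∃ a b : ℝ, ∀ v : ℝ, v ^ 2 ≤ (N : ℝ) →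
      kacK N (fun x => x ^ 4 + a * x ^ 2 + b) v
        = (3 / ((N : ℝ) ^ 2 - 1)) * (v ^ 4 + a * v ^ 2 + b) := by
  have hn4 : (4:ℝ) ≤ (N:ℝ) := by exact_mod_cast hN
  have hp : (0:ℝ) ≤ ((N:ℝ) - 4)/2 := by linarith
  have hne1 : (N:ℝ) - 1 ≠ 0 := by linarith
  have hne1' : (N:ℝ) + 1 ≠ 0 := by linarith
  have hne2 : (N:ℝ) + 2 ≠ 0 := by linarith
  have hne4 : (N:ℝ) + 4 ≠ 0 := by linarith
  have hnesq : (N:ℝ)^2 - 1 ≠ 0 := by nlinarith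
  -- value of the 0th moment
  have hI0 : Ik 0 (((N:ℝ) - 4)/2)
      = Real.sqrt π * Real.Gamma (((N:ℝ)-2)/2) / Real.Gamma (((N:ℝ)-1)/2) := by
    have hcast : ((N - 4 : ℕ):ℝ) = (N:ℝ) - 4 := by
      rw [Nat.cast_sub hN]; norm_num
    have h := Jval (N - 4)
    rw [hcast, show ((N:ℝ)-4)/2 + 1 = ((N:ℝ)-2)/2 by ring,
      show ((N:ℝ)-4)/2 + 3/2 = ((N:ℝ)-1)/2 by ring] at h
    exact h
  have hΓ1 : (0:ℝ) < Real.Gamma (((N:ℝ)-2)/2) := Real.Gamma_pos_of_pos (by linarith)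
  have hΓ2 : (0:ℝ) < Real.Gamma (((N:ℝ)-1)/2) := Real.Gamma_pos_of_pos (by linarith)
  -- the constant times the 0th moment is 1
  have hc0 : (unitSphereArea (N - 3) / unitSphereArea (N - 2)) * Ik 0 (((N:ℝ) - 4)/2) = 1 := by
    rw [hI0]
    unfold unitSphereArea
    have c3 : ((N - 3 : ℕ):ℝ) = (N:ℝ) - 3 := by
      rw [Nat.cast_sub (by omega : 3 ≤ N)]; norm_num
    have c2 : ((N - 2 : ℕ):ℝ) = (N:ℝ) - 2 := by
      rw [Nat.cast_sub (by omega : 2 ≤ N)]; norm_num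
    rw [c3, c2, show ((N:ℝ)-3+1)/2 = ((N:ℝ)-2)/2 by ring,
      show ((N:ℝ)-2+1)/2 = ((N:ℝ)-1)/2 by ring]
    have hπpow : π ^ (((N:ℝ)-2)/2) * π ^ ((1:ℝ)/2) = π ^ (((N:ℝ)-1)/2) := by
      rw [← Real.rpow_add Real.pi_pos,
        show ((N:ℝ)-2)/2 + 1/2 = ((N:ℝ)-1)/2 by ring]
    have hA : (0:ℝ) < π ^ (((N:ℝ)-2)/2) := Real.rpow_pos_of_pos Real.pi_pos _
    have hB : (0:ℝ) < π ^ (((N:ℝ)-1)/2) := Real.rpow_pos_of_pos Real.pi_pos _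
    rw [Real.sqrt_eq_rpow]
    field_simp
    linear_combination hπpow
  -- moment ratios
  have hrel1 : Ik 0 (((N:ℝ) - 4)/2) = ((N:ℝ) - 1) * Ik 2 (((N:ℝ) - 4)/2) := by
    have := rel1 hp
    rw [show 2 * (((N:ℝ)-4)/2) + 3 = (N:ℝ) - 1 by ring] at this
    exact this
  have hrel2 : 3 * Ik 2 (((N:ℝ) - 4)/2) = ((N:ℝ) + 1) * Ik 4 (((N:ℝ) - 4)/2) := by
    have := rel2 hp
    rw [show 2 * (((N:ℝ)-4)/2) + 5 = (N:ℝ) + 1 by ring] at this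
    exact this
  set c : ℝ := unitSphereArea (N - 3) / unitSphereArea (N - 2) with hcdef
  have hc2 : c * Ik 2 (((N:ℝ) - 4)/2) = 1 / ((N:ℝ) - 1) := by
    rw [hrel1] at hc0
    rw [eq_div_iff hne1]
    linear_combination hc0
  have hc4 : c * Ik 4 (((N:ℝ) - 4)/2) = 3 / (((N:ℝ) - 1) * ((N:ℝ) + 1)) := by
    have hA : 3 * (c * Ik 2 (((N:ℝ) - 4)/2)) = ((N:ℝ)+1) * (c * Ik 4 (((N:ℝ) - 4)/2)) := by
      linear_combination c * hrel2
    rw [eq_div_iff (mul_ne_zero hne1 hne1')]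
    rw [hc2] at hA
    field_simp at hA
    linear_combination -hA
  constructor
  · intro v hv
    have hw : (0:ℝ) ≤ (N:ℝ) - v^2 := by linarith
    have hsq : Real.sqrt ((N:ℝ) - v^2) ^ 2 = (N:ℝ) - v^2 := Real.sq_sqrt hw
    have hintegrand : ∀ s : ℝ,
        ((Real.sqrt ((N:ℝ) - v^2) * s) ^ 2 - 1) * (1 - s^2) ^ (((N:ℝ)-4)/2)
        = ((N:ℝ) - v^2) * (s^2 * (1-s^2)^(((N:ℝ)-4)/2))
          - s^0 * (1-s^2)^(((N:ℝ)-4)/2) := by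
      intro s
      rw [mul_pow, hsq]
      ring
    simp only [kacK]
    simp only [hintegrand]
    rw [intervalIntegral.integral_sub ((intInt hp 2).const_mul _) (intInt hp 0),
      intervalIntegral.integral_const_mul]
    rw [show (∫ s in (-1:ℝ)..1, s ^ 2 * (1 - s ^ 2) ^ (((N:ℝ)-4)/2))
        = Ik 2 (((N:ℝ)-4)/2) from rfl,
      show (∫ s in (-1:ℝ)..1, s ^ 0 * (1 - s ^ 2) ^ (((N:ℝ)-4)/2))
        = Ik 0 (((N:ℝ)-4)/2) from rfl]
    have hsplit : c * (((N:ℝ) - v^2) * Ik 2 (((N:ℝ)-4)/2) - Ik 0 (((N:ℝ)-4)/2))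
        = ((N:ℝ) - v^2) * (c * Ik 2 (((N:ℝ)-4)/2)) - c * Ik 0 (((N:ℝ)-4)/2) := by
      ring
    rw [hsplit, hc2, hc0]
    field_simp
    ring
  · refine ⟨-6 * (N:ℝ) / ((N:ℝ) + 4), 3 * (N:ℝ)^2 / (((N:ℝ) + 2) * ((N:ℝ) + 4)), ?_⟩
    intro v hv
    have hw : (0:ℝ) ≤ (N:ℝ) - v^2 := by linarith
    have hsq : Real.sqrt ((N:ℝ) - v^2) ^ 2 = (N:ℝ) - v^2 := Real.sq_sqrt hw
    have hsq4 : Real.sqrt ((N:ℝ) - v^2) ^ 4 = ((N:ℝ) - v^2)^2 := by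
      rw [show Real.sqrt ((N:ℝ) - v^2) ^ 4 = (Real.sqrt ((N:ℝ) - v^2) ^ 2)^2 by ring, hsq]
    have hintegrand : ∀ s : ℝ,
        ((Real.sqrt ((N:ℝ) - v^2) * s) ^ 4
          + (-6 * (N:ℝ) / ((N:ℝ) + 4)) * (Real.sqrt ((N:ℝ) - v^2) * s) ^ 2
          + 3 * (N:ℝ)^2 / (((N:ℝ) + 2) * ((N:ℝ) + 4))) * (1 - s^2) ^ (((N:ℝ)-4)/2)
        = ((N:ℝ) - v^2)^2 * (s^4 * (1-s^2)^(((N:ℝ)-4)/2))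
          + (-6 * (N:ℝ) / ((N:ℝ) + 4) * ((N:ℝ) - v^2)) * (s^2 * (1-s^2)^(((N:ℝ)-4)/2))
          + (3 * (N:ℝ)^2 / (((N:ℝ) + 2) * ((N:ℝ) + 4))) * (s^0 * (1-s^2)^(((N:ℝ)-4)/2)) := by
      intro s
      rw [mul_pow, mul_pow, hsq, hsq4]
      ring
    simp only [kacK]
    simp only [hintegrand]
    rw [intervalIntegral.integral_add (((intInt hp 4).const_mul _).add
        ((intInt hp 2).const_mul _)) ((intInt hp 0).const_mul _),
      intervalIntegral.integral_add ((intInt hp 4).const_mul _)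
        ((intInt hp 2).const_mul _),
      intervalIntegral.integral_const_mul, intervalIntegral.integral_const_mul,
      intervalIntegral.integral_const_mul]
    rw [show (∫ s in (-1:ℝ)..1, s ^ 4 * (1 - s ^ 2) ^ (((N:ℝ)-4)/2))
        = Ik 4 (((N:ℝ)-4)/2) from rfl,
      show (∫ s in (-1:ℝ)..1, s ^ 2 * (1 - s ^ 2) ^ (((N:ℝ)-4)/2))
        = Ik 2 (((N:ℝ)-4)/2) from rfl,
      show (∫ s in (-1:ℝ)..1, s ^ 0 * (1 - s ^ 2) ^ (((N:ℝ)-4)/2))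
        = Ik 0 (((N:ℝ)-4)/2) from rfl]
    have hsplit : c * (((N:ℝ) - v^2)^2 * Ik 4 (((N:ℝ)-4)/2)
          + (-6 * (N:ℝ) / ((N:ℝ) + 4) * ((N:ℝ) - v^2)) * Ik 2 (((N:ℝ)-4)/2)
          + (3 * (N:ℝ)^2 / (((N:ℝ) + 2) * ((N:ℝ) + 4))) * Ik 0 (((N:ℝ)-4)/2))
        = ((N:ℝ) - v^2)^2 * (c * Ik 4 (((N:ℝ)-4)/2))
          + (-6 * (N:ℝ) / ((N:ℝ) + 4) * ((N:ℝ) - v^2)) * (c * Ik 2 (((N:ℝ)-4)/2))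
          + (3 * (N:ℝ)^2 / (((N:ℝ) + 2) * ((N:ℝ) + 4))) * (c * Ik 0 (((N:ℝ)-4)/2)) := by
      ring
    rw [hsplit, hc2, hc0, hc4]
    field_simp
    ring
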